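/- Let m > ν > 0 and n > 0 and t* = (1/ν)·log(m/(m-ν)). Then -∫_{t*}^{∞} (1/n)·e^{-mt}·(m(e^{-νt}-1)+ν) dt = (ν/((ν+m)n))·(m/(m-ν))^{-(ν+m)/ν}. -/

import Mathlib

open MeasureTheory

lemma int_exp_neg_mul_Ioi (a : ℝ) {b : ℝ} (hb : 0 < b) :
    ∫ x in Set.Ioi a, Real.exp (-(b * x)) = Real.exp (-(b * a)) / b := by
  have hderiv : ∀ x ∈ Set.Ici a,
      HasDerivAt (fun x : ℝ => -Real.exp (-(b * x)) / b) (Real.exp (-(b * x))) x := by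
    intro x _
    have h : HasDerivAt (fun x : ℝ => -(b * x)) (-b) x := by
      simpa using ((hasDerivAt_id x).const_mul (-b))
    have := ((h.exp).neg).div_const b
    refine this.congr_deriv ?_
    simp [hb.ne']
  have hint : IntegrableOn (fun x : ℝ => Real.exp (-(b * x))) (Set.Ioi a) := by
    have := exp_neg_integrableOn_Ioi a hb
    simpa [neg_mul] using this
  have htend : Filter.Tendsto (fun x : ℝ => -Real.exp (-(b * x)) / b)
      Filter.atTop (nhds 0) := by
    have h1 : Filter.Tendsto (fun x : ℝ => -(b * x)) Filter.atTop Filter.atBot := by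
      exact Filter.tendsto_neg_atTop_atBot.comp (Filter.Tendsto.const_mul_atTop hb Filter.tendsto_id)
    have := (Real.tendsto_exp_atBot.comp h1).neg.div_const b
    simpa using this
  have := integral_Ioi_of_hasDerivAt_of_tendsto' hderiv hint htend
  rw [this]
  field_simp
  ring

/-- The Hall–Cresser–Li–Anderson non-Markovianity measure of the quasi-eternally
non-Markovian GAD channel. -/
theorem qenm_gad_hcla_measure (m n ν : ℝ) (hνm : ν < m) (hν : 0 < ν) (hn : 0 < n)
    (tstar : ℝ) (htstar : tstar = (1 / ν) * Real.log (m / (m - ν))) :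
    -(∫ t in Set.Ioi tstar,
        (1 / n) * Real.exp (-(m * t)) * (m * (Real.exp (-(ν * t)) - 1) + ν))
      = (ν / ((ν + m) * n)) * (m / (m - ν)) ^ (-((ν + m) / ν)) := by
  have hm : 0 < m := hν.trans hνm
  have hmν : 0 < m - ν := sub_pos.mpr hνm
  have hmadd : 0 < m + ν := by linarith
  have hA : 0 < m / (m - ν) := div_pos hm hmν
  set A := m / (m - ν) with hAdef
  -- rewrite integrand
  have hfun : ∀ t : ℝ,
      (1 / n) * Real.exp (-(m * t)) * (m * (Real.exp (-(ν * t)) - 1) + ν)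
        = (m / n) * Real.exp (-((m + ν) * t)) - ((m - ν) / n) * Real.exp (-(m * t)) := by
    intro t
    rw [show -((m + ν) * t) = -(m * t) + -(ν * t) by ring, Real.exp_add]
    ring
  have hi1 : IntegrableOn (fun t : ℝ => (m / n) * Real.exp (-((m + ν) * t)))
      (Set.Ioi tstar) := by
    have := exp_neg_integrableOn_Ioi tstar hmadd
    simpa only [neg_mul, IntegrableOn] using this.const_mul (m / n)
  have hi2 : IntegrableOn (fun t : ℝ => ((m - ν) / n) * Real.exp (-(m * t)))
      (Set.Ioi tstar) := by
    have := exp_neg_integrableOn_Ioi tstar hm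
    simpa only [neg_mul, IntegrableOn] using this.const_mul ((m - ν) / n)
  calc
    -(∫ t in Set.Ioi tstar,
        (1 / n) * Real.exp (-(m * t)) * (m * (Real.exp (-(ν * t)) - 1) + ν))
      = -(∫ t in Set.Ioi tstar,
        ((m / n) * Real.exp (-((m + ν) * t)) - ((m - ν) / n) * Real.exp (-(m * t)))) := by
        congr 1; exact integral_congr_ae (Filter.Eventually.of_forall fun t => hfun t)
    _ = -((m / n) * (Real.exp (-((m + ν) * tstar)) / (m + ν))
          - ((m - ν) / n) * (Real.exp (-(m * tstar)) / m)) := by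
        rw [integral_sub hi1 hi2, integral_const_mul, integral_const_mul,
          int_exp_neg_mul_Ioi tstar hmadd, int_exp_neg_mul_Ioi tstar hm]
    _ = (ν / ((ν + m) * n)) * A ^ (-((ν + m) / ν)) := by
        have hlog : Real.log A = ν * tstar := by
          rw [htstar]; field_simp
        have h1 : Real.exp (-((m + ν) * tstar)) = A ^ (-((ν + m) / ν)) := by
          have hx : -((m + ν) * tstar) = Real.log A * (-((ν + m) / ν)) := by
            rw [hlog]; field_simp; ring
          rw [hx, Real.rpow_def_of_pos hA]
        have h2 : Real.exp (-(m * tstar)) = A ^ (-((ν + m) / ν)) * A := by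
          have hx : -(m * tstar) = Real.log A * (-((ν + m) / ν)) + Real.log A := by
            rw [hlog]; field_simp; ring
          rw [hx, Real.exp_add, Real.rpow_def_of_pos hA, Real.exp_log hA]
        rw [h1, h2]
        set B := A ^ (-((ν + m) / ν)) with hB
        have hAeq : (m - ν) * A = m := by
          rw [hAdef]; field_simp
        have : ((m - ν) / n) * ((B * A) / m) = B / n := by
          field_simp
          calc (m - ν) * B * A
              = ((m - ν) * A) * B := by ring
            _ = m * B := by rw [hAeq]
        rw [this]
        field_simp
        ring
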